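/- Let C be a preadditive category. Let N, V, N′, V′ be objects of C; let c : N → V, v : V → N, dcan : V′ → N′ and dvar : N′ → V′ be morphisms; let e : V ≅ V′ and d : N ≅ N′ be isomorphisms; let t : V ≅ V be an isomorphism and s : V′ → V′ a morphism. Assume: (i) c ∘ v = 𝟙_V − t (the relation can∘var = id − T̃ at the dual object); (ii) dvar ∘ dcan = 𝟙_{V′} − s (the dual of the same relation at the original object); (iii) e ∘ t⁻¹ = s ∘ e (ε conjugates T̃⁻¹ to 𝒟(T̃)); (iv) e ∘ c = dvar ∘ d (the right square of diagram (4.1) commutes); (v) d ∘ v = dcan ∘ e (the left square of diagram (4.1) commutes). Then t ∘ t = 𝟙_V, i.e. t = t⁻¹. (Hence, since the vanishing-cycle monodromy T̃ is in general not an involution, the two squares of diagram (4.1) cannot both commute with the same isomorphism δ.) -/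
import Mathlib


open CategoryTheory

universe v u

/-- in a preadditive category, if `c ∘ v = 𝟙 - t`, `dvar ∘ dcan = 𝟙 - s`,
`e ∘ t⁻¹ = s ∘ e`, `e ∘ c = dvar ∘ d` and `d ∘ v = dcan ∘ e`, then `t ∘ t = 𝟙`,
i.e. `t = t⁻¹`.  (Hence both squares of diagram (4.1) cannot commute with the same `δ`,
since the vanishing-cycle monodromy is in general not an involution.) -/
theorem monodromy_involution_of_both_squares_commute
    {C : Type u} [Category.{v} C] [Preadditive C]
    (N V N' V' : C) (c : N ⟶ V) (v : V ⟶ N) (dcan : V' ⟶ N') (dvar : N' ⟶ V')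
    (e : V ≅ V') (d : N ≅ N') (t : V ≅ V) (s : V' ⟶ V')
    (h1 : v ≫ c = 𝟙 V - t.hom)
    (h2 : dcan ≫ dvar = 𝟙 V' - s)
    (h3 : t.inv ≫ e.hom = e.hom ≫ s)
    (h4 : c ≫ e.hom = d.hom ≫ dvar)
    (h5 : v ≫ d.hom = e.hom ≫ dcan) :
    t.hom ≫ t.hom = 𝟙 V ∧ t.hom = t.inv := by
  have key : e.hom ≫ (dcan ≫ dvar) = (v ≫ c) ≫ e.hom := by
    rw [← Category.assoc, ← h5, Category.assoc, ← h4, Category.assoc]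
  rw [h1, h2, Preadditive.comp_sub, Preadditive.sub_comp, Category.comp_id,
    Category.id_comp] at key
  have hts : e.hom ≫ s = t.hom ≫ e.hom := by
    have := sub_right_injective key
    exact this
  have heq : t.inv = t.hom := by
    have h := h3.trans hts
    calc t.inv = (t.inv ≫ e.hom) ≫ e.inv := by simp
    _ = (t.hom ≫ e.hom) ≫ e.inv := by rw [h]
    _ = t.hom := by simp
  constructor
  · nth_rewrite 2 [← heq]; exact t.hom_inv_id
  · exact heq.symm
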